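/- With sin θ = √(|S|/2^n) and θ ∈ (0, π/2), the Grover amplitudes satisfy the recursion: if ψ_k has marked amplitude sin θ_k/√|S| and unmarked amplitude cos θ_k/√(2^n−|S|) with θ_k = (2k+1)θ, then applying the Grover operator G (oracle then diffusion) yields the state with marked amplitude sin θ_{k+1}/√|S| and unmarked amplitude cos θ_{k+1}/√(2^n−|S|), where θ_{k+1} = θ_k + 2θ. -/

import Mathlib

/-- the Grover operator acts as a rotation by `2θ`. If `ψ_k` has
marked amplitude `sin θ_k/√|S|` and unmarked amplitude `cos θ_k/√(N−|S|)` with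
`θ_k = (2k+1)θ` and `sin θ = √(|S|/2^n)`, then applying the oracle followed by
the diffusion `D = 2|u⟩⟨u| − I` yields the state with angle `θ_{k+1} = θ_k + 2θ`. -/
theorem grover_iteration_rotation (n : ℕ) (S : Finset (Fin (2 ^ n)))
    (hS : S.Nonempty) (hScard : S.card < 2 ^ n)
    (θ : ℝ) (hθ : θ ∈ Set.Ioo 0 (Real.pi / 2))
    (hsin : Real.sin θ = Real.sqrt ((S.card : ℝ) / (2 ^ n : ℝ)))
    (k : ℕ) (θk : ℝ) (hθk : θk = (2 * k + 1) * θ)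
    (ψk Oψk Gψk : Fin (2 ^ n) → ℂ)
    (hψk : ∀ x, ψk x = if x ∈ S
      then ((Real.sin θk / Real.sqrt S.card : ℝ) : ℂ)
      else ((Real.cos θk / Real.sqrt ((2 ^ n : ℝ) - S.card) : ℝ) : ℂ))
    (hO : ∀ x, Oψk x = if x ∈ S then -ψk x else ψk x)
    (hD : ∀ x, Gψk x =
      2 * (∑ y, (starRingEnd ℂ) ((1 / Real.sqrt (2 ^ n) : ℝ) : ℂ) * Oψk y)
        * ((1 / Real.sqrt (2 ^ n) : ℝ) : ℂ) - Oψk x) :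
    ∀ x, Gψk x = if x ∈ S
      then ((Real.sin (θk + 2 * θ) / Real.sqrt S.card : ℝ) : ℂ)
      else ((Real.cos (θk + 2 * θ) / Real.sqrt ((2 ^ n : ℝ) - S.card) : ℝ) : ℂ) := by
  intro x
  obtain ⟨hθ0, hθ2⟩ := hθ
  have hN0 : (0:ℝ) < (2:ℝ) ^ n := by positivity
  have hM0 : (0:ℝ) < (S.card : ℝ) := by
    exact_mod_cast Nat.cast_pos.mpr (Finset.card_pos.mpr hS)
  have hC0 : (0:ℝ) < (2 ^ n : ℝ) - S.card := by
    have : (S.card : ℝ) < (2 ^ n : ℝ) := by exact_mod_cast hScard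
    linarith
  set sM := Real.sqrt S.card with hsM
  set sC := Real.sqrt ((2 ^ n : ℝ) - S.card) with hsC
  set sN := Real.sqrt ((2:ℝ) ^ n) with hsN
  have hsM0 : 0 < sM := Real.sqrt_pos.mpr hM0
  have hsC0 : 0 < sC := Real.sqrt_pos.mpr hC0
  have hsN0 : 0 < sN := Real.sqrt_pos.mpr hN0
  have hsM2 : sM ^ 2 = S.card := Real.sq_sqrt hM0.le
  have hsC2 : sC ^ 2 = (2 ^ n : ℝ) - S.card := Real.sq_sqrt hC0.le
  have hsN2 : sN ^ 2 = (2:ℝ) ^ n := Real.sq_sqrt hN0.le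
  have hrel : sM ^ 2 + sC ^ 2 = sN ^ 2 := by rw [hsM2, hsC2, hsN2]; ring
  have hsin' : Real.sin θ = sM / sN := by
    rw [hsin, Real.sqrt_div hM0.le]
  have hcos : Real.cos θ = sC / sN := by
    have hcnn : 0 ≤ Real.cos θ := Real.cos_nonneg_of_mem_Icc
      ⟨by linarith [Real.pi_pos], hθ2.le⟩
    have h2 : Real.sin θ ^ 2 = (S.card : ℝ) / (2 ^ n : ℝ) := by
      rw [hsin]; exact Real.sq_sqrt (by positivity)
    have hsq : Real.cos θ ^ 2 = ((2 ^ n : ℝ) - S.card) / (2 ^ n : ℝ) := by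
      rw [Real.cos_sq', h2]; field_simp
    have : Real.cos θ = Real.sqrt (((2 ^ n : ℝ) - S.card) / (2 ^ n : ℝ)) := by
      rw [← hsq, Real.sqrt_sq hcnn]
    rw [this, Real.sqrt_div hC0.le]
  set a := Real.sin θk with ha
  set b := Real.cos θk with hb
  have hOval : ∀ y, Oψk y = if y ∈ S then ((-(a / sM) : ℝ) : ℂ) else ((b / sC : ℝ) : ℂ) := by
    intro y
    rw [hO y, hψk y]
    by_cases hy : y ∈ S <;> simp [hy]
  have hcardc : ((Finset.univ.filter (fun y => y ∉ S)).card : ℝ) = (2 ^ n : ℝ) - S.card := by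
    have h1 : (Finset.univ.filter (fun y => y ∉ S)) = Sᶜ := by
      ext y; simp
    rw [h1, Finset.card_compl]
    have h2 : S.card ≤ Fintype.card (Fin (2 ^ n)) := by
      simpa using Finset.card_le_univ S
    push_cast [Nat.cast_sub h2]
    simp
  have hcardcC : (((Finset.univ.filter (fun y => y ∉ S)).card : ℕ) : ℂ)
      = (((2 ^ n : ℝ) - S.card : ℝ) : ℂ) := by
    rw [← hcardc]; push_cast; ring
  have hsum : (∑ y, Oψk y) = (((-(sM * a) + sC * b) : ℝ) : ℂ) := by
    calc ∑ y, Oψk y = ∑ y, (if y ∈ S then ((-(a / sM) : ℝ) : ℂ) else ((b / sC : ℝ) : ℂ)) := by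
          exact Finset.sum_congr rfl (fun y _ => hOval y)
      _ = (Finset.univ.filter (fun y => y ∈ S)).card • ((-(a / sM) : ℝ) : ℂ)
          + (Finset.univ.filter (fun y => y ∉ S)).card • ((b / sC : ℝ) : ℂ) := by
          rw [Finset.sum_ite, Finset.sum_const, Finset.sum_const]
      _ = (((sM ^ 2 * (-(a / sM)) + sC ^ 2 * (b / sC)) : ℝ) : ℂ) := by
          have h1 : (Finset.univ.filter (fun y => y ∈ S)) = S := by ext y; simp
          rw [h1, nsmul_eq_mul, nsmul_eq_mul, hcardcC]
          rw [show ((S.card : ℕ) : ℂ) = ((sM ^ 2 : ℝ) : ℂ) by rw [hsM2]; push_cast; ring]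
          rw [show (((2 ^ n : ℝ) - S.card : ℝ) : ℂ) = ((sC ^ 2 : ℝ) : ℂ) by rw [hsC2]]
          push_cast
          ring
      _ = (((-(sM * a) + sC * b) : ℝ) : ℂ) := by
          congr 1
          field_simp
  rw [hD x, hOval x]
  simp only [Complex.conj_ofReal]
  rw [← Finset.mul_sum, hsum]
  have h2c : Real.cos (2 * θ) = 1 - 2 * (sM / sN) ^ 2 := by
    have h2 := Real.sin_sq_add_cos_sq θ
    rw [hsin'] at h2
    rw [Real.cos_two_mul', hsin']
    linarith
  have h2s : Real.sin (2 * θ) = 2 * (sM / sN) * (sC / sN) := by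
    rw [Real.sin_two_mul, hsin', hcos]
  by_cases hx : x ∈ S
  · simp only [hx, if_true]
    rw [show ((2:ℂ) * (((1 / sN : ℝ) : ℂ) * (((-(sM * a) + sC * b) : ℝ) : ℂ)) * ((1 / sN : ℝ) : ℂ)
        - ((-(a / sM) : ℝ) : ℂ))
        = (((2 * ((1 / sN) * (-(sM * a) + sC * b)) * (1 / sN) + a / sM : ℝ)) : ℂ) from by
      push_cast; ring]
    norm_cast
    rw [Real.sin_add, h2c, h2s, ← ha, ← hb]
    field_simp
    ring
  · simp only [hx, if_false]
    rw [show ((2:ℂ) * (((1 / sN : ℝ) : ℂ) * (((-(sM * a) + sC * b) : ℝ) : ℂ)) * ((1 / sN : ℝ) : ℂ)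
        - ((b / sC : ℝ) : ℂ))
        = (((2 * ((1 / sN) * (-(sM * a) + sC * b)) * (1 / sN) - b / sC : ℝ)) : ℂ) from by
      push_cast; ring]
    norm_cast
    rw [Real.cos_add, h2c, h2s, ← ha, ← hb]
    field_simp
    linear_combination (2 * b) * hrel
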